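/- Let a_{ij} = a_{ji} ∈ ℝ be symmetric edge weights of a weighted graph on vertices {1,…,n} with upper unitriangular Seifert matrix S (entry −a_{ij} in position (i,j) for i < j, 1's on the diagonal). For real t ≠ 0 set M(t) = t·S + t⁻¹·Sᵀ, G(t) = det M(t), let N(t) be M(t) with the first row and column deleted, G₁(t) = det N(t), and A_{ij}(t) = (adj N(t))_{ij}. Then for every real x ≠ 0, with ' denoting the derivative with respect to x: G'(x)·G₁(x) − G(x)·G₁'(x) = (1 − x⁻²)·G₁(x)² + Σ_{2 ≤ i,j ≤ n} a_{1i}·a_{1j}·(G₁'(x)·A_{ij}(x) − G₁(x)·A_{ij}'(x)). -/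

import Mathlib

open Matrix Finset

lemma det_add_outer {n : ℕ} (A : Matrix (Fin n) (Fin n) ℝ) (u v : Fin n → ℝ) :
    (Matrix.of fun i j => A i j + u i * v j).det
      = A.det + ∑ i, u i * (A.updateRow i v).det := by
  classical
  have h1 : (Matrix.of fun i j => A i j + u i * v j).det
      = Matrix.detRowAlternating ((fun i => A i) + fun i => u i • v) := by
    congr 1
  have h2 := MultilinearMap.map_add_univ
    (Matrix.detRowAlternating (R := ℝ) (n := Fin n)).toMultilinearMap (fun i => A i) (fun i => u i • v)
  rw [AlternatingMap.coe_multilinearMap] at h2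
  rw [h1, h2]
  -- now: ∑ s : Finset (Fin n), detRowAlternating (s.piecewise A (fun i => u i • v)) = ...
  set B : Fin n → Fin n → ℝ := fun i => u i • v with hB
  set F : Finset (Fin n) → ℝ := fun s => Matrix.detRowAlternating (s.piecewise (fun i => A i) B) with hF
  set T : Finset (Finset (Fin n)) :=
    insert Finset.univ (Finset.image (fun i : Fin n => ({i}ᶜ : Finset (Fin n))) Finset.univ) with hT
  have hzero : ∀ s ∈ Finset.univ, s ∉ T → F s = 0 := by
    intro s _ hs
    simp only [hT, Finset.mem_insert, Finset.mem_image, Finset.mem_univ, true_and, not_or,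
      not_exists] at hs
    obtain ⟨hs1, hs2⟩ := hs
    have hcard : 1 < sᶜ.card := by
      rcases Nat.lt_or_ge 1 sᶜ.card with h | h
      · exact h
      · interval_cases h' : sᶜ.card
        · exfalso; exact hs1 (by simpa [Finset.card_eq_zero, Finset.compl_eq_empty_iff] using h')
        · exfalso
          obtain ⟨i, hi⟩ := Finset.card_eq_one.mp h'
          exact hs2 i (by rw [← compl_compl s, hi])
    obtain ⟨i, hi, j, hj, hij⟩ := Finset.one_lt_card.mp hcard
    rw [Finset.mem_compl] at hi hj
    set M : Matrix (Fin n) (Fin n) ℝ := s.piecewise (fun i => A i) B with hM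
    have hMi : M i = u i • v := by simp [hM, Finset.piecewise_eq_of_notMem _ _ _ hi, hB]
    have hMj : M j = u j • v := by simp [hM, Finset.piecewise_eq_of_notMem _ _ _ hj, hB]
    have : F s = M.det := rfl
    rw [this]
    have e1 : M.det = u i * (M.updateRow i v).det := by
      conv_lhs => rw [← Matrix.updateRow_eq_self M i, hMi]
      rw [Matrix.det_updateRow_smul]
    have e2 : (M.updateRow i v).det = u j * ((M.updateRow i v).updateRow j v).det := by
      conv_lhs => rw [← Matrix.updateRow_eq_self (M.updateRow i v) j,
        Matrix.updateRow_ne (Ne.symm hij), hMj]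
      rw [Matrix.det_updateRow_smul]
    have e3 : ((M.updateRow i v).updateRow j v).det = 0 := by
      apply Matrix.det_zero_of_row_eq hij
      rw [Matrix.updateRow_ne hij, Matrix.updateRow_self, Matrix.updateRow_self]
    rw [e1, e2, e3]
    ring
  rw [← Finset.sum_subset (Finset.subset_univ T) hzero]
  have hins : Finset.univ ∉ Finset.image (fun i : Fin n => ({i}ᶜ : Finset (Fin n))) Finset.univ := by
    simp only [Finset.mem_image, Finset.mem_univ, true_and, not_exists]
    intro i h
    have : i ∈ ({i}ᶜ : Finset (Fin n)) := h ▸ Finset.mem_univ i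
    simp at this
  rw [hT, Finset.sum_insert hins, Finset.sum_image (by
    intro i _ j _ h
    simpa using congrArg (·ᶜ) h)]
  congr 1
  · show Matrix.detRowAlternating (Finset.univ.piecewise (fun i => A i) B) = A.det
    rw [Finset.piecewise_univ]
    rfl
  · refine Finset.sum_congr rfl fun i _ => ?_
    have hpw : (({i}ᶜ : Finset (Fin n)).piecewise (fun i => A i) B) = A.updateRow i (u i • v) := by
      funext k
      by_cases hk : k = i
      · subst hk
        rw [Finset.piecewise_eq_of_notMem _ _ _ (by simp), Matrix.updateRow_self]
      · rw [Finset.piecewise_eq_of_mem _ _ _ (by simp [hk]), Matrix.updateRow_ne hk]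
    show Matrix.detRowAlternating (({i}ᶜ : Finset (Fin n)).piecewise (fun i => A i) B) = _
    rw [hpw]
    show (A.updateRow i (u i • v)).det = _
    rw [Matrix.det_updateRow_smul]

lemma key_det {n : ℕ} (a : Fin (n + 1) → Fin (n + 1) → ℝ)
    (S : Matrix (Fin (n + 1)) (Fin (n + 1)) ℝ)
    (hS : ∀ i j, S i j = if i = j then 1 else if i < j then -a i j else 0)
    (t : ℝ) (ht : t ≠ 0) :
    (t • S + t⁻¹ • Sᵀ).det
      = (t + t⁻¹) * ((t • S + t⁻¹ • Sᵀ).submatrix Fin.succ Fin.succ).det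
        - ∑ i : Fin n, ∑ j : Fin n, a 0 i.succ * a 0 j.succ *
            ((t • S + t⁻¹ • Sᵀ).submatrix Fin.succ Fin.succ).adjugate i j := by
  classical
  set M : Matrix (Fin (n + 1)) (Fin (n + 1)) ℝ := t • S + t⁻¹ • Sᵀ with hMdef
  set N : Matrix (Fin n) (Fin n) ℝ := M.submatrix Fin.succ Fin.succ with hNdef
  set d : ℝ := t + t⁻¹ with hddef
  have hd : d ≠ 0 := by
    rw [hddef]
    intro h
    have h2 : t * (t + t⁻¹) = 0 := by rw [h, mul_zero]
    rw [mul_add, mul_inv_cancel₀ ht] at h2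
    nlinarith [sq_nonneg t]
  have hM : ∀ i j, M i j = t * S i j + t⁻¹ * S j i := by
    intro i j
    simp [hMdef, Matrix.add_apply, Matrix.smul_apply, Matrix.transpose_apply, smul_eq_mul]
  let e : (Fin 1 ⊕ Fin n) ≃ Fin (n + 1) :=
    { toFun := Sum.elim (fun _ => (0 : Fin (n + 1))) Fin.succ
      invFun := fun i => Fin.cases (Sum.inl 0) Sum.inr i
      left_inv := by
        rintro (x | i)
        · simp [Subsingleton.elim x 0]
        · simp
      right_inv := by
        intro i
        induction i using Fin.cases <;> simp }
  set B : Matrix (Fin 1) (Fin n) ℝ := Matrix.of fun _ j => -(t * a 0 j.succ) with hB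
  set C : Matrix (Fin n) (Fin 1) ℝ := Matrix.of fun i _ => -(t⁻¹ * a 0 i.succ) with hC
  have hblock : M.submatrix e e = Matrix.fromBlocks (d • 1) B C N := by
    ext i j
    cases i with
    | inl i =>
      cases j with
      | inl j =>
        have hi : i = 0 := Subsingleton.elim i 0
        have hj : j = 0 := Subsingleton.elim j 0
        subst hi hj
        show M 0 0 = (d • (1 : Matrix (Fin 1) (Fin 1) ℝ)) 0 0
        rw [hM, hS]
        simp [hddef]
      | inr j =>
        show M 0 j.succ = B 0 j
        rw [hM, hS, hS, if_neg ((Fin.succ_ne_zero j).symm : ¬ ((0 : Fin (n+1)) = j.succ)),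
          if_pos (Fin.succ_pos j), if_neg (Fin.succ_ne_zero j),
          if_neg (Fin.not_lt_zero (j.succ : Fin (n+1)))]
        show t * -a 0 j.succ + t⁻¹ * 0 = -(t * a 0 j.succ)
        ring
    | inr i =>
      cases j with
      | inl j =>
        have hj : j = 0 := Subsingleton.elim j 0
        subst hj
        show M i.succ 0 = C i 0
        rw [hM, hS, hS, if_neg (Fin.succ_ne_zero i),
          if_neg (Fin.not_lt_zero (i.succ : Fin (n+1))),
          if_neg ((Fin.succ_ne_zero i).symm : ¬ ((0 : Fin (n+1)) = i.succ)),
          if_pos (Fin.succ_pos i)]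
        show t * 0 + t⁻¹ * -a 0 i.succ = -(t⁻¹ * a 0 i.succ)
        ring
      | inr j =>
        show M i.succ j.succ = N i j
        rfl
  haveI : Invertible (d • (1 : Matrix (Fin 1) (Fin 1) ℝ)) := by
    refine Matrix.invertibleOfIsUnitDet _ ?_
    rw [Matrix.det_fin_one]
    simpa using isUnit_iff_ne_zero.2 hd
  have hinv : ⅟(d • (1 : Matrix (Fin 1) (Fin 1) ℝ)) = d⁻¹ • (1 : Matrix (Fin 1) (Fin 1) ℝ) := by
    refine invOf_eq_right_inv ?_
    rw [Matrix.smul_mul, Matrix.mul_smul, Matrix.mul_one, smul_smul, mul_inv_cancel₀ hd, one_smul]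
  set u : Fin n → ℝ := fun i => -(d⁻¹ * C i 0) with hu
  set v : Fin n → ℝ := fun j => B 0 j with hv
  have hmat : N - C * ⅟(d • (1 : Matrix (Fin 1) (Fin 1) ℝ)) * B
      = Matrix.of fun i j => N i j + u i * v j := by
    rw [hinv]
    ext i j
    simp only [Matrix.sub_apply, Matrix.mul_apply, Fin.sum_univ_one, Matrix.smul_apply,
      Matrix.one_apply_eq, Matrix.of_apply, hu, hv, smul_eq_mul]
    ring
  have hupd : ∀ i, (N.updateRow i v).det = ∑ j, N.adjugate j i * v j := by
    intro i
    have h1 : (N.updateRow i v).det = (Nᵀ.updateCol i v).det := by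
      rw [Matrix.updateCol_transpose, Matrix.det_transpose]
    rw [h1, ← Matrix.cramer_apply, Matrix.cramer_eq_adjugate_mulVec, ← Matrix.adjugate_transpose]
    simp [Matrix.mulVec, dotProduct, Matrix.transpose_apply]
  calc M.det = (M.submatrix e e).det := (Matrix.det_submatrix_equiv_self e M).symm
    _ = (Matrix.fromBlocks (d • 1) B C N).det := by rw [hblock]
    _ = (d • (1 : Matrix (Fin 1) (Fin 1) ℝ)).det
        * (N - C * ⅟(d • (1 : Matrix (Fin 1) (Fin 1) ℝ)) * B).det :=
      Matrix.det_fromBlocks₁₁ _ _ _ _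
    _ = d * (N.det + ∑ i, u i * (N.updateRow i v).det) := by
      rw [hmat, det_add_outer, Matrix.det_fin_one]
      simp
    _ = d * N.det - ∑ i : Fin n, ∑ j : Fin n,
          a 0 i.succ * a 0 j.succ * N.adjugate i j := by
      rw [mul_add, Finset.mul_sum]
      have h3 : ∀ i : Fin n, d * (u i * (N.updateRow i v).det)
          = ∑ j, -(a 0 i.succ * a 0 j.succ * N.adjugate j i) := by
        intro i
        rw [hupd i, Finset.mul_sum, Finset.mul_sum]
        refine Finset.sum_congr rfl fun j _ => ?_
        show d * (-(d⁻¹ * (-(t⁻¹ * a 0 i.succ))) * (N.adjugate j i * -(t * a 0 j.succ))) = _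
        field_simp
      rw [Finset.sum_congr rfl fun i _ => h3 i]
      rw [Finset.sum_comm]
      simp only [Finset.sum_neg_distrib]
      rw [sub_eq_add_neg]
      congr 1
      congr 1
      refine Finset.sum_congr rfl fun i _ => Finset.sum_congr rfl fun j _ => ?_
      ring

lemma differentiableAt_det_comp {m : ℕ} {F : ℝ → Matrix (Fin m) (Fin m) ℝ} {x : ℝ}
    (h : ∀ i j, DifferentiableAt ℝ (fun t => F t i j) x) :
    DifferentiableAt ℝ (fun t => (F t).det) x := by
  simp only [Matrix.det_apply']
  exact DifferentiableAt.fun_sum fun σ _ =>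
    DifferentiableAt.const_mul (DifferentiableAt.fun_finsetProd fun i _ => h (σ i) i) _

/-- The Wronskian identity (5) of Proposition 1, over the reals.  The weighted graph
has `n + 1` vertices, symmetric real weights `a`, Seifert matrix `S`,
`Mf t = t • S + t⁻¹ • Sᵀ`, `G t = det (Mf t)`, `Nf t` is `Mf t` with the first row
and column deleted, `G1 t = det (Nf t)`, `Af t = adjugate (Nf t)`; `'` is the
derivative with respect to the real variable, taken at any `x ≠ 0`. -/
theorem coxeter_wronskian_identity (n : ℕ)
    (a : Fin (n + 1) → Fin (n + 1) → ℝ) (hsym : ∀ i j, a i j = a j i)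
    (S : Matrix (Fin (n + 1)) (Fin (n + 1)) ℝ)
    (hS : ∀ i j, S i j = if i = j then 1 else if i < j then -a i j else 0)
    (Mf : ℝ → Matrix (Fin (n + 1)) (Fin (n + 1)) ℝ)
    (hMf : ∀ t, Mf t = t • S + t⁻¹ • Sᵀ)
    (G : ℝ → ℝ) (hG : ∀ t, G t = (Mf t).det)
    (Nf : ℝ → Matrix (Fin n) (Fin n) ℝ)
    (hNf : ∀ t, Nf t = (Mf t).submatrix Fin.succ Fin.succ)
    (G1 : ℝ → ℝ) (hG1 : ∀ t, G1 t = (Nf t).det)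
    (Af : ℝ → Matrix (Fin n) (Fin n) ℝ)
    (hAf : ∀ t, Af t = (Nf t).adjugate)
    (x : ℝ) (hx : x ≠ 0) :
    deriv G x * G1 x - G x * deriv G1 x
      = (1 - (x⁻¹) ^ 2) * (G1 x) ^ 2
        + ∑ i : Fin n, ∑ j : Fin n,
            a 0 i.succ * a 0 j.succ *
              (deriv G1 x * Af x i j - G1 x * deriv (fun t => Af t i j) x) := by
  classical
  have hMf' : Mf = fun t => t • S + t⁻¹ • Sᵀ := funext hMf
  subst hMf'
  have hNf' : Nf = fun t => (t • S + t⁻¹ • Sᵀ).submatrix Fin.succ Fin.succ := funext hNf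
  subst hNf'
  have hG' : G = fun t => (t • S + t⁻¹ • Sᵀ).det := funext hG
  subst hG'
  have hG1' : G1 = fun t => ((t • S + t⁻¹ • Sᵀ).submatrix Fin.succ Fin.succ).det := funext hG1
  subst hG1'
  have hAf' : Af = fun t => ((t • S + t⁻¹ • Sᵀ).submatrix Fin.succ Fin.succ).adjugate :=
    funext hAf
  subst hAf'
  -- abbreviations
  set Nfun : ℝ → Matrix (Fin n) (Fin n) ℝ :=
    fun t => (t • S + t⁻¹ • Sᵀ).submatrix Fin.succ Fin.succ with hNfun
  -- differentiability of entries
  have hM_entry : ∀ i j : Fin (n + 1),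
      DifferentiableAt ℝ (fun t => (t • S + t⁻¹ • Sᵀ) i j) x := by
    intro i j
    have hfun : (fun t : ℝ => (t • S + t⁻¹ • Sᵀ) i j) = fun t => t * S i j + t⁻¹ * S j i := by
      funext t
      simp [Matrix.add_apply, Matrix.smul_apply, Matrix.transpose_apply, smul_eq_mul]
    rw [hfun]
    exact (differentiableAt_id.mul (differentiableAt_const _)).add
      ((differentiableAt_inv hx).mul (differentiableAt_const _))
  have hN_entry : ∀ i j : Fin n, DifferentiableAt ℝ (fun t => Nfun t i j) x :=
    fun i j => hM_entry i.succ j.succ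
  have hG1diff : DifferentiableAt ℝ (fun t => (Nfun t).det) x := differentiableAt_det_comp hN_entry
  have hAdiff : ∀ i j : Fin n, DifferentiableAt ℝ (fun t => (Nfun t).adjugate i j) x := by
    intro i j
    have hfun : (fun t => (Nfun t).adjugate i j)
        = fun t => ((Nfun t).updateRow j (Pi.single i 1)).det := by
      funext t
      rw [Matrix.adjugate_apply]
    rw [hfun]
    refine differentiableAt_det_comp fun k l => ?_
    rcases eq_or_ne k j with rfl | hk
    · simp only [Matrix.updateRow_self]
      exact differentiableAt_const _
    · simp only [Matrix.updateRow_ne hk]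
      exact hN_entry k l
  set P : ℝ → ℝ := fun t => ∑ i : Fin n, ∑ j : Fin n,
    a 0 i.succ * a 0 j.succ * (Nfun t).adjugate i j with hP
  set p' : ℝ := ∑ i : Fin n, ∑ j : Fin n,
    a 0 i.succ * a 0 j.succ * deriv (fun t => (Nfun t).adjugate i j) x with hp'
  have hPd : HasDerivAt P p' x := by
    refine HasDerivAt.fun_sum fun i _ => HasDerivAt.fun_sum fun j _ => ?_
    exact ((hAdiff i j).hasDerivAt).const_mul _
  set g1 : ℝ := (Nfun x).det with hg1
  set d1 : ℝ := deriv (fun t => (Nfun t).det) x with hd1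
  have hG1d : HasDerivAt (fun t => (Nfun t).det) d1 x := hG1diff.hasDerivAt
  have hF : HasDerivAt (fun t => (t + t⁻¹) * (Nfun t).det - P t)
      ((1 + -(x ^ 2)⁻¹) * g1 + (x + x⁻¹) * d1 - p') x :=
    (((hasDerivAt_id x).add (hasDerivAt_inv hx)).mul hG1d).sub hPd
  have hGev : (fun t => (t • S + t⁻¹ • Sᵀ).det)
      =ᶠ[nhds x] fun t => (t + t⁻¹) * (Nfun t).det - P t := by
    filter_upwards [IsOpen.mem_nhds isOpen_ne hx] with t ht
    exact key_det a S hS t ht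
  have hDG : deriv (fun t => (t • S + t⁻¹ • Sᵀ).det) x
      = (1 + -(x ^ 2)⁻¹) * g1 + (x + x⁻¹) * d1 - p' :=
    (hF.congr_of_eventuallyEq hGev).deriv
  have hGx : (x • S + x⁻¹ • Sᵀ).det = (x + x⁻¹) * g1 - P x := key_det a S hS x hx
  have hsum : ∑ i : Fin n, ∑ j : Fin n, a 0 i.succ * a 0 j.succ *
        (d1 * (Nfun x).adjugate i j - g1 * deriv (fun t => (Nfun t).adjugate i j) x)
      = d1 * P x - g1 * p' := by
    rw [hP, hp', Finset.mul_sum, Finset.mul_sum, ← Finset.sum_sub_distrib]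
    refine Finset.sum_congr rfl fun i _ => ?_
    rw [Finset.mul_sum, Finset.mul_sum, ← Finset.sum_sub_distrib]
    refine Finset.sum_congr rfl fun j _ => ?_
    ring
  show deriv (fun t => (t • S + t⁻¹ • Sᵀ).det) x * g1 - (x • S + x⁻¹ • Sᵀ).det * d1
      = (1 - (x⁻¹) ^ 2) * g1 ^ 2
        + ∑ i : Fin n, ∑ j : Fin n, a 0 i.succ * a 0 j.succ *
            (d1 * (Nfun x).adjugate i j - g1 * deriv (fun t => (Nfun t).adjugate i j) x)
  rw [hDG, hGx, hsum, inv_pow]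
  ring
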